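/- Let d be coprime to p^n − 1 and W_d(a) = ∑_{x ∈ F_{p^n}} ω^{Tr(x^d − ax)}. Then ∑_{a ∈ F_{p^n}} W_d(a)³ = p^{2n}·M_1 and ∑_{a ∈ F_{p^n}} W_d(a)⁴ = p^{2n} ∑_{a ∈ F_{p^n}} M_a², where M_a = #{x ∈ F_{p^n} : (x+1)^d − x^d = a}. -/

import Mathlib

noncomputable instance (p n : ℕ) [Fact p.Prime] : Fintype (GaloisField p n) :=
  Fintype.ofFinite _

/-- `ω = exp(2πi/p)` raised to (the integer lift of) an element of `F_p`. -/
noncomputable def ew (p : ℕ) (x : ZMod p) : ℂ :=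
  Complex.exp (2 * Real.pi * Complex.I / p) ^ x.val

/-- The absolute trace from `F_{p^n}` to `F_p`. -/
noncomputable def Tr (p n : ℕ) [Fact p.Prime] (x : GaloisField p n) : ZMod p :=
  Algebra.trace (ZMod p) (GaloisField p n) x

open Finset

section ewlemmas
variable (p : ℕ) [Fact p.Prime]

lemma zeta_pow_p : Complex.exp (2 * Real.pi * Complex.I / p) ^ p = 1 := by
  have hp : (p : ℂ) ≠ 0 := Nat.cast_ne_zero.mpr (Fact.out : p.Prime).pos.ne'
  rw [← Complex.exp_nat_mul, mul_comm, div_mul_cancel₀ _ hp, Complex.exp_two_pi_mul_I]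

lemma ew_add (a b : ZMod p) : ew p (a + b) = ew p a * ew p b := by
  haveI : NeZero p := ⟨(Fact.out : p.Prime).pos.ne'⟩
  unfold ew
  rw [ZMod.val_add, ← pow_add]
  exact (pow_eq_pow_mod _ (zeta_pow_p p)).symm

lemma ew_zero : ew p 0 = 1 := by
  haveI : NeZero p := ⟨(Fact.out : p.Prime).pos.ne'⟩
  simp [ew]

lemma ew_ne_one {a : ZMod p} (ha : a ≠ 0) : ew p a ≠ 1 := by
  haveI : NeZero p := ⟨(Fact.out : p.Prime).pos.ne'⟩
  have hprim := Complex.isPrimitiveRoot_exp p (Fact.out : p.Prime).pos.ne'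
  intro h
  have hdvd : p ∣ a.val := (hprim.pow_eq_one_iff_dvd _).mp h
  have := Nat.eq_zero_of_dvd_of_lt hdvd (ZMod.val_lt a)
  · exact ha ((ZMod.val_eq_zero a).mp this)

end ewlemmas

-- general finite-field power bijection
lemma pow_bij {F : Type*} [Field F] [Fintype F] {d : ℕ} (hd : 0 < d)
    (hgcd : Nat.gcd d (Fintype.card F - 1) = 1) :
    Function.Bijective fun x : F => x ^ d := by
  classical
  have hco : (Nat.card Fˣ).Coprime d := by
    rw [Nat.card_eq_fintype_card, Fintype.card_units]
    exact Nat.coprime_comm.mp hgcd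
  have hu := hco.pow_left_bijective
  rw [Fintype.bijective_iff_injective_and_card]
  refine ⟨fun x y hxy => ?_, rfl⟩
  simp only at hxy
  by_cases hx : x = 0
  · subst hx
    rw [eq_comm, zero_pow hd.ne', pow_eq_zero_iff hd.ne'] at hxy
    exact hxy.symm
  by_cases hy : y = 0
  · subst hy
    rw [zero_pow hd.ne', pow_eq_zero_iff hd.ne'] at hxy
    exact hxy
  · have : (Units.mk0 x hx) ^ d = (Units.mk0 y hy) ^ d := by
      ext
      simpa using hxy
    have := hu.injective this
    simpa [Units.ext_iff] using this

section psi
variable (p n : ℕ) [Fact p.Prime]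

lemma psi_add (x y : GaloisField p n) :
    ew p (Tr p n (x + y)) = ew p (Tr p n x) * ew p (Tr p n y) := by
  rw [show Tr p n (x + y) = Tr p n x + Tr p n y from map_add _ x y, ew_add]

lemma psi_zero : ew p (Tr p n 0) = 1 := by
  rw [show Tr p n 0 = 0 from map_zero _, ew_zero]

open scoped Classical in
lemma psi_orth (t : GaloisField p n) :
    ∑ a : GaloisField p n, ew p (Tr p n (a * t))
      = if t = 0 then (Fintype.card (GaloisField p n) : ℂ) else 0 := by
  by_cases ht : t = 0
  · simp [ht, psi_zero, Finset.card_univ]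
  · rw [if_neg ht]
    obtain ⟨c, hc⟩ := Algebra.trace_surjective (ZMod p) (GaloisField p n) 1
    set b : GaloisField p n := c * t⁻¹ with hb
    have hbt : Tr p n (b * t) = 1 := by
      rw [hb, mul_assoc, inv_mul_cancel₀ ht, mul_one]
      exact hc
    have hne : ew p (Tr p n (b * t)) ≠ 1 := by
      rw [hbt]; exact ew_ne_one p one_ne_zero
    set S := ∑ a : GaloisField p n, ew p (Tr p n (a * t)) with hS
    have hshift : ∑ a : GaloisField p n, ew p (Tr p n ((a + b) * t)) = S :=
      Fintype.sum_bijective (· + b) (Equiv.addRight b).bijective _ _ fun a => rfl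
    have hmul : ∑ a : GaloisField p n, ew p (Tr p n ((a + b) * t))
        = S * ew p (Tr p n (b * t)) := by
      rw [hS, Finset.sum_mul]
      refine Finset.sum_congr rfl fun a _ => ?_
      rw [← psi_add, add_mul]
    rw [hmul] at hshift
    exact eq_zero_of_mul_eq_self_right hne hshift

lemma neg_pow_d (hn : n ≠ 0) {d : ℕ} (hd : 0 < d) (hgcd : Nat.gcd d (p ^ n - 1) = 1)
    (x : GaloisField p n) : (-x) ^ d = -(x ^ d) := by
  rcases (Fact.out : p.Prime).eq_two_or_odd' with hp2 | hodd
  · subst hp2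
    haveI : CharP (GaloisField 2 n) 2 := inferInstance
    rw [CharTwo.neg_eq, CharTwo.neg_eq]
  · have hde : Odd d := by
      rcases Nat.even_or_odd d with he | ho
      · exfalso
        have h2 : 2 ∣ p ^ n - 1 :=
          (Nat.Odd.sub_odd (hodd.pow) odd_one).two_dvd
        have := Nat.dvd_gcd he.two_dvd h2
        rw [hgcd] at this
        omega
      · exact ho
    exact hde.neg_pow x

lemma card_gf (hn : n ≠ 0) : (Fintype.card (GaloisField p n)) = p ^ n := by
  rw [← Nat.card_eq_fintype_card, GaloisField.card p n hn]

end psi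

variable {F : Type*} [Field F] [Fintype F] [DecidableEq F]

lemma sum_erase_pow_mul (ψ : F → ℂ) (h0 : ψ 0 = 1)
    (horth : ∀ t : F, ∑ a : F, ψ (a * t) = if t = 0 then (Fintype.card F : ℂ) else 0)
    {d : ℕ} (hd : 0 < d) (hbij : Function.Bijective fun x : F => x ^ d) (c : F) :
    ∑ y ∈ univ.erase 0, ψ (y ^ d * c)
      = (if c = 0 then (Fintype.card F : ℂ) else 0) - 1 := by
  have hall : ∑ y : F, ψ (y ^ d * c) = ∑ w : F, ψ (w * c) :=
    Fintype.sum_bijective _ hbij _ _ fun y => rfl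
  rw [horth] at hall
  have hsplit := Finset.add_sum_erase univ (fun y : F => ψ (y ^ d * c)) (mem_univ 0)
  have h00 : ψ (0 ^ d * c) = 1 := by rw [zero_pow hd.ne', zero_mul, h0]
  rw [h00, hall] at hsplit
  linear_combination hsplit

lemma cube_moment (ψ : F → ℂ)
    (hadd : ∀ x y : F, ψ (x + y) = ψ x * ψ y) (h0 : ψ 0 = 1)
    (horth : ∀ t : F, ∑ a : F, ψ (a * t) = if t = 0 then (Fintype.card F : ℂ) else 0)
    {d : ℕ} (hd : 0 < d) (hbij : Function.Bijective fun x : F => x ^ d)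
    (hneg : ∀ x : F, (-x) ^ d = -(x ^ d)) :
    ∑ a : F, (∑ x : F, ψ (x ^ d - a * x)) ^ 3
      = (Fintype.card F : ℂ) ^ 2 *
          ∑ u : F, (if (u + 1) ^ d - u ^ d = 1 then (1 : ℂ) else 0) := by
  set q : ℂ := (Fintype.card F : ℂ) with hqdef
  -- Step 1: expand the cube and collapse the `a`-sum.
  have e1 : ∀ a : F, (∑ x : F, ψ (x ^ d - a * x)) ^ 3
      = ∑ x : F, ∑ y : F, ∑ z : F,
          ψ (x ^ d + y ^ d + z ^ d) * ψ (a * (-(x + y + z))) := by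
    intro a
    rw [pow_succ, pow_two, Finset.sum_mul_sum, Finset.sum_mul_sum]
    simp_rw [Finset.sum_mul]
    refine Finset.sum_congr rfl fun x _ => Finset.sum_congr rfl fun y _ =>
      Finset.sum_congr rfl fun z _ => ?_
    rw [← hadd, ← hadd, ← hadd]
    congr 1
    ring
  simp_rw [e1]
  rw [Finset.sum_comm]
  have e2 : ∀ x : F, (∑ a : F, ∑ y : F, ∑ z : F,
        ψ (x ^ d + y ^ d + z ^ d) * ψ (a * (-(x + y + z))))
      = ∑ y : F, ∑ z : F, ψ (x ^ d + y ^ d + z ^ d) * ∑ a : F, ψ (a * (-(x + y + z))) := by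
    intro x
    rw [Finset.sum_comm]
    refine Finset.sum_congr rfl fun y _ => ?_
    rw [Finset.sum_comm]
    refine Finset.sum_congr rfl fun z _ => ?_
    rw [Finset.mul_sum]
  simp_rw [e2, horth, neg_eq_zero]
  -- collapse the z-sum
  have hcond : ∀ x y z : F, (x + y + z = 0) ↔ (z = -(x + y)) := fun x y z =>
    ⟨fun h => by linear_combination h, fun h => by linear_combination h⟩
  simp_rw [hcond, mul_ite, mul_zero, Finset.sum_ite_eq', Finset.mem_univ, if_true, hneg,
    ← Finset.sum_mul]
  rw [Finset.sum_comm]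
  -- now : (∑ y ∑ x ψ(x^d + y^d - (x+y)^d)) * q = q^2 * ...
  rw [← Finset.add_sum_erase _ _ (mem_univ (0 : F))]
  have hy0 : ∑ x : F, ψ (x ^ d + (0:F) ^ d + -(x + 0) ^ d) = q := by
    have harg : ∀ x : F, x ^ d + (0:F) ^ d + -(x + 0) ^ d = 0 := fun x => by
      rw [zero_pow hd.ne']; ring
    simp [harg, h0, hqdef, zero_pow hd.ne']
  rw [hy0]
  have hsub : ∀ y : F, y ≠ 0 → ∑ x : F, ψ (x ^ d + y ^ d + -(x + y) ^ d)
      = ∑ u : F, ψ (y ^ d * (u ^ d + 1 - (u + 1) ^ d)) := by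
    intro y hy
    have hb : Function.Bijective fun u : F => y * u := (Equiv.mulLeft₀ y hy).bijective
    have hrw := Fintype.sum_bijective _ hb
      (fun u : F => ψ ((y * u) ^ d + y ^ d + -((y * u) + y) ^ d))
      (fun x : F => ψ (x ^ d + y ^ d + -(x + y) ^ d)) (fun u => rfl)
    rw [← hrw]
    refine Finset.sum_congr rfl fun u _ => ?_
    show ψ ((y * u) ^ d + y ^ d + -(y * u + y) ^ d) = ψ (y ^ d * (u ^ d + 1 - (u + 1) ^ d))
    rw [show y * u + y = y * (u + 1) by ring, mul_pow, mul_pow]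
    congr 1
    ring
  have hrest : ∑ y ∈ univ.erase 0, ∑ x : F, ψ (x ^ d + y ^ d + -(x + y) ^ d)
      = ∑ u : F, ((if u ^ d + 1 - (u + 1) ^ d = 0 then q else 0) - 1) := by
    rw [Finset.sum_congr rfl fun y hy => hsub y (Finset.mem_erase.mp hy).1]
    rw [Finset.sum_comm]
    refine Finset.sum_congr rfl fun u _ => ?_
    exact sum_erase_pow_mul ψ h0 horth hd hbij _
  rw [hrest, Finset.sum_sub_distrib]
  have hiterw : ∀ u : F, (if u ^ d + 1 - (u + 1) ^ d = 0 then q else 0)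
      = q * (if (u + 1) ^ d - u ^ d = 1 then (1 : ℂ) else 0) := by
    intro u
    have hiff : (u ^ d + 1 - (u + 1) ^ d = 0) ↔ ((u + 1) ^ d - u ^ d = 1) :=
      ⟨fun h => by linear_combination -h, fun h => by linear_combination -h⟩
    rw [if_congr hiff rfl rfl]
    split_ifs <;> ring
  simp_rw [hiterw, ← Finset.mul_sum]
  have hone : ∑ _u : F, (1 : ℂ) = q := by simp [hqdef]
  rw [hone]
  ring

lemma quartic_moment (ψ : F → ℂ)
    (hadd : ∀ x y : F, ψ (x + y) = ψ x * ψ y) (h0 : ψ 0 = 1)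
    (horth : ∀ t : F, ∑ a : F, ψ (a * t) = if t = 0 then (Fintype.card F : ℂ) else 0)
    {d : ℕ} (hd : 0 < d) (hbij : Function.Bijective fun x : F => x ^ d)
    (hneg : ∀ x : F, (-x) ^ d = -(x ^ d)) :
    ∑ a : F, (∑ x : F, ψ (x ^ d - a * x)) ^ 4
      = (Fintype.card F : ℂ) ^ 2 *
          ∑ u : F, ∑ v : F,
            (if (u + 1) ^ d - u ^ d = (v + 1) ^ d - v ^ d then (1 : ℂ) else 0) := by
  set q : ℂ := (Fintype.card F : ℂ) with hqdef
  have e1 : ∀ a : F, (∑ x : F, ψ (x ^ d - a * x)) ^ 4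
      = ∑ x : F, ∑ y : F, ∑ z : F, ∑ w : F,
          ψ (x ^ d + y ^ d + z ^ d + w ^ d) * ψ (a * (-(x + y + z + w))) := by
    intro a
    rw [pow_succ, pow_succ, pow_two, Finset.sum_mul_sum, Finset.sum_mul_sum,
      Finset.sum_mul_sum]
    simp_rw [Finset.sum_mul]
    refine Finset.sum_congr rfl fun x _ => Finset.sum_congr rfl fun y _ =>
      Finset.sum_congr rfl fun z _ => Finset.sum_congr rfl fun w _ => ?_
    rw [← hadd, ← hadd, ← hadd, ← hadd]
    congr 1
    ring
  simp_rw [e1]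
  rw [Finset.sum_comm]
  have e2 : ∀ x : F, (∑ a : F, ∑ y : F, ∑ z : F, ∑ w : F,
        ψ (x ^ d + y ^ d + z ^ d + w ^ d) * ψ (a * (-(x + y + z + w))))
      = ∑ y : F, ∑ z : F, ∑ w : F,
          ψ (x ^ d + y ^ d + z ^ d + w ^ d) * ∑ a : F, ψ (a * (-(x + y + z + w))) := by
    intro x
    rw [Finset.sum_comm]
    refine Finset.sum_congr rfl fun y _ => ?_
    rw [Finset.sum_comm]
    refine Finset.sum_congr rfl fun z _ => ?_
    rw [Finset.sum_comm]
    refine Finset.sum_congr rfl fun w _ => ?_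
    rw [Finset.mul_sum]
  simp_rw [e2, horth, neg_eq_zero]
  have hcond : ∀ x y z w : F, (x + y + z + w = 0) ↔ (w = -(x + y + z)) := fun x y z w =>
    ⟨fun h => by linear_combination h, fun h => by linear_combination h⟩
  simp_rw [hcond, mul_ite, mul_zero, Finset.sum_ite_eq', Finset.mem_univ, if_true, hneg,
    ← Finset.sum_mul]
  have e3 : ∀ x : F, (∑ y : F, ∑ z : F, ψ (x ^ d + y ^ d + z ^ d + -(x + y + z) ^ d))
      = ∑ s : F, ∑ z : F, ψ (x ^ d + (s - x) ^ d) * ψ (z ^ d + -((s + z) ^ d)) := by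
    intro x
    have hb : Function.Bijective fun s : F => s - x := (Equiv.subRight x).bijective
    have hrw := Fintype.sum_bijective _ hb
      (fun s : F => ∑ z : F, ψ (x ^ d + (s - x) ^ d + z ^ d + -(x + (s - x) + z) ^ d))
      (fun y : F => ∑ z : F, ψ (x ^ d + y ^ d + z ^ d + -(x + y + z) ^ d)) (fun s => rfl)
    rw [← hrw]
    refine Finset.sum_congr rfl fun s _ => Finset.sum_congr rfl fun z _ => ?_
    show ψ (x ^ d + (s - x) ^ d + z ^ d + -(x + (s - x) + z) ^ d)
      = ψ (x ^ d + (s - x) ^ d) * ψ (z ^ d + -((s + z) ^ d))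
    rw [show x + (s - x) + z = s + z by ring]
    rw [show x ^ d + (s - x) ^ d + z ^ d + -(s + z) ^ d
        = (x ^ d + (s - x) ^ d) + (z ^ d + -((s + z) ^ d)) by ring, hadd]
  simp_rw [e3]
  rw [Finset.sum_comm]
  have e4 : ∀ s : F, (∑ x : F, ∑ z : F, ψ (x ^ d + (s - x) ^ d) * ψ (z ^ d + -((s + z) ^ d)))
      = (∑ x : F, ψ (x ^ d + (s - x) ^ d)) * (∑ z : F, ψ (z ^ d + -((s + z) ^ d))) :=
    fun s => (Finset.sum_mul_sum _ _ _ _).symm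
  simp_rw [e4]
  rw [← Finset.add_sum_erase _ _ (mem_univ (0 : F))]
  have h00 : (∑ x : F, ψ (x ^ d + ((0 : F) - x) ^ d)) *
      (∑ z : F, ψ (z ^ d + -(((0 : F) + z) ^ d))) = q * q := by
    have h1 : ∀ x : F, x ^ d + ((0 : F) - x) ^ d = 0 := fun x => by
      rw [zero_sub, hneg]; ring
    have h2 : ∀ z : F, z ^ d + -(((0 : F) + z) ^ d) = 0 := fun z => by
      rw [zero_add]; ring
    simp_rw [h1, h2, h0]
    simp [hqdef]
  rw [h00]
  have hsub4 : ∀ s : F, s ≠ 0 →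
      (∑ x : F, ψ (x ^ d + (s - x) ^ d)) * (∑ z : F, ψ (z ^ d + -((s + z) ^ d)))
        = ∑ u : F, ∑ v : F,
            ψ (s ^ d * ((u ^ d + (1 - u) ^ d) + (v ^ d - (1 + v) ^ d))) := by
    intro s hs
    have hb : Function.Bijective fun u : F => s * u := (Equiv.mulLeft₀ s hs).bijective
    have hx : ∑ x : F, ψ (x ^ d + (s - x) ^ d)
        = ∑ u : F, ψ (s ^ d * (u ^ d + (1 - u) ^ d)) := by
      have hrw := Fintype.sum_bijective _ hb
        (fun u : F => ψ ((s * u) ^ d + (s - s * u) ^ d))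
        (fun x : F => ψ (x ^ d + (s - x) ^ d)) (fun u => rfl)
      rw [← hrw]
      refine Finset.sum_congr rfl fun u _ => ?_
      show ψ ((s * u) ^ d + (s - s * u) ^ d) = ψ (s ^ d * (u ^ d + (1 - u) ^ d))
      rw [show s - s * u = s * (1 - u) by ring, mul_pow, mul_pow]
      congr 1
      ring
    have hz : ∑ z : F, ψ (z ^ d + -((s + z) ^ d))
        = ∑ v : F, ψ (s ^ d * (v ^ d - (1 + v) ^ d)) := by
      have hrw := Fintype.sum_bijective _ hb
        (fun v : F => ψ ((s * v) ^ d + -((s + s * v) ^ d)))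
        (fun z : F => ψ (z ^ d + -((s + z) ^ d))) (fun v => rfl)
      rw [← hrw]
      refine Finset.sum_congr rfl fun v _ => ?_
      show ψ ((s * v) ^ d + -((s + s * v) ^ d)) = ψ (s ^ d * (v ^ d - (1 + v) ^ d))
      rw [show s + s * v = s * (1 + v) by ring, mul_pow, mul_pow]
      congr 1
      ring
    rw [hx, hz, Finset.sum_mul_sum]
    refine Finset.sum_congr rfl fun u _ => Finset.sum_congr rfl fun v _ => ?_
    rw [← hadd]
    congr 1
    ring
  have hrest : ∑ s ∈ univ.erase 0,
      (∑ x : F, ψ (x ^ d + (s - x) ^ d)) * (∑ z : F, ψ (z ^ d + -((s + z) ^ d)))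
      = ∑ u : F, ∑ v : F,
          ((if (u ^ d + (1 - u) ^ d) + (v ^ d - (1 + v) ^ d) = 0 then q else 0) - 1) := by
    rw [Finset.sum_congr rfl fun s hs => hsub4 s (Finset.mem_erase.mp hs).1]
    rw [Finset.sum_comm]
    refine Finset.sum_congr rfl fun u _ => ?_
    rw [Finset.sum_comm]
    refine Finset.sum_congr rfl fun v _ => ?_
    exact sum_erase_pow_mul ψ h0 horth hd hbij _
  rw [hrest]
  have hre : ∑ u : F, ∑ v : F,
      ((if (u ^ d + (1 - u) ^ d) + (v ^ d - (1 + v) ^ d) = 0 then q else 0) - 1)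
      = ∑ u : F, ∑ v : F,
          ((if (u + 1) ^ d - u ^ d = (v + 1) ^ d - v ^ d then q else 0) - 1) := by
    have hb : Function.Bijective fun u : F => -u := neg_involutive.bijective
    have hrw := Fintype.sum_bijective _ hb
      (fun u : F => ∑ v : F,
        ((if ((-u) ^ d + (1 - -u) ^ d) + (v ^ d - (1 + v) ^ d) = 0 then q else 0) - 1))
      (fun u : F => ∑ v : F,
        ((if (u ^ d + (1 - u) ^ d) + (v ^ d - (1 + v) ^ d) = 0 then q else 0) - 1))
      (fun u => rfl)
    rw [← hrw]
    refine Finset.sum_congr rfl fun u _ => Finset.sum_congr rfl fun v _ => ?_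
    have hiff : (((-u) ^ d + (1 - -u) ^ d) + (v ^ d - (1 + v) ^ d) = 0)
        ↔ ((u + 1) ^ d - u ^ d = (v + 1) ^ d - v ^ d) := by
      rw [hneg]
      constructor <;> intro h
      · linear_combination h
      · linear_combination h
    rw [if_congr hiff rfl rfl]
  rw [hre]
  have hsplit2 : ∑ u : F, ∑ v : F,
      ((if (u + 1) ^ d - u ^ d = (v + 1) ^ d - v ^ d then q else 0) - 1)
      = q * (∑ u : F, ∑ v : F,
          (if (u + 1) ^ d - u ^ d = (v + 1) ^ d - v ^ d then (1 : ℂ) else 0)) - q * q := by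
    simp_rw [Finset.sum_sub_distrib, Finset.sum_const, Finset.card_univ, nsmul_eq_mul,
      mul_one, Finset.mul_sum, mul_ite, mul_one, mul_zero]
    rfl
  rw [hsplit2]
  ring

lemma natCard_cast (P : F → Prop) [DecidablePred P] :
    ((Nat.card {x : F // P x} : ℂ)) = ∑ x : F, if P x then (1 : ℂ) else 0 := by
  rw [Nat.card_eq_fintype_card, Fintype.card_subtype, Finset.card_filter, Nat.cast_sum]
  exact Finset.sum_congr rfl fun x _ => by split_ifs <;> simp

lemma sq_count (e : F → F) :
    ∑ a : F, (∑ x : F, if e x = a then (1 : ℂ) else 0) ^ 2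
      = ∑ u : F, ∑ v : F, (if e u = e v then (1 : ℂ) else 0) := by
  simp_rw [pow_two, Finset.sum_mul_sum]
  rw [Finset.sum_comm]
  refine Finset.sum_congr rfl fun u _ => ?_
  rw [Finset.sum_comm]
  refine Finset.sum_congr rfl fun v _ => ?_
  simp_rw [ite_mul, one_mul, zero_mul]
  rw [Finset.sum_ite_eq]
  simp only [Finset.mem_univ, if_true]
  exact if_congr eq_comm rfl rfl

/-- Third and fourth power moments of the Walsh transform of `Tr(x^d)` in terms
of `M_a = #{x : (x+1)^d - x^d = a}`. -/
theorem walsh_third_fourth_moments (p n : ℕ) [Fact p.Prime] (hn : 1 ≤ n)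
    (d : ℕ) (hd : 0 < d) (hgcd : Nat.gcd d (p ^ n - 1) = 1) :
    (∑ a : GaloisField p n,
        (∑ x : GaloisField p n, ew p (Tr p n (x ^ d - a * x))) ^ 3)
      = (p : ℂ) ^ (2 * n) *
          (Nat.card {x : GaloisField p n // (x + 1) ^ d - x ^ d = 1} : ℂ) ∧
    (∑ a : GaloisField p n,
        (∑ x : GaloisField p n, ew p (Tr p n (x ^ d - a * x))) ^ 4)
      = (p : ℂ) ^ (2 * n) *
          ∑ a : GaloisField p n,
            (Nat.card {x : GaloisField p n // (x + 1) ^ d - x ^ d = a} : ℂ) ^ 2 := by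
  classical
  have hn' : n ≠ 0 := by omega
  have hadd := psi_add p n
  have h0 := psi_zero p n
  have horth := psi_orth p n
  have hcardF : (Fintype.card (GaloisField p n)) = p ^ n := card_gf p n hn'
  have hbij : Function.Bijective fun x : GaloisField p n => x ^ d :=
    pow_bij hd (by rw [hcardF]; exact hgcd)
  have hneg := neg_pow_d p n hn' hd hgcd
  have hq2 : (p : ℂ) ^ (2 * n) = ((Fintype.card (GaloisField p n) : ℂ)) ^ 2 := by
    rw [hcardF]
    push_cast
    rw [mul_comm 2 n, pow_mul]
  constructor
  · have h3 := cube_moment (fun z : GaloisField p n => ew p (Tr p n z))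
      hadd h0 horth hd hbij hneg
    rw [h3, hq2, natCard_cast (fun x : GaloisField p n => (x + 1) ^ d - x ^ d = 1)]
  · have h4 := quartic_moment (fun z : GaloisField p n => ew p (Tr p n z))
      hadd h0 horth hd hbij hneg
    rw [h4, hq2]
    congr 1
    have := sq_count (fun x : GaloisField p n => (x + 1) ^ d - x ^ d)
    rw [← this]
    exact Finset.sum_congr rfl fun a _ => by
      rw [natCard_cast (fun x : GaloisField p n => (x + 1) ^ d - x ^ d = a)]
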